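/- arXiv:1604.03500 — 9 statements merged into one kernel-verified Lean document; each statement's English description precedes it below -/
import Mathlib

section
/- Let P be a poset and x₁, x₂, y₁, y₂ ∈ P. The space of module homomorphisms from the interval module M[x₁,x₂] to the interval module M[y₁,y₂] is one-dimensional if x₁ ≤ y₁ ≤ x₂ ≤ y₂, and zero otherwise. -/
/-- The space of module homomorphisms `M[S] → M[T]` between interval modules over
the incidence category of a poset `Q`, where `S`, `T` are the supporting intervals.
A homomorphism is given by its scalar components `φ x` (nonzero only on `S ∩ T`),
subject to the naturality conditions coming from the identity structure maps. -/
def intervalHom (K : Type*) [Field K] {Q : Type*} [PartialOrder Q] (S T : Set Q) :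
    Submodule K (Q → K) where
  carrier := {φ | (∀ x, x ∉ S ∩ T → φ x = 0) ∧
    (∀ x y, x ≤ y → x ∈ S ∩ T → y ∈ S ∩ T → φ x = φ y) ∧
    (∀ x y, x ≤ y → y ∈ S ∩ T → x ∈ T → x ∉ S → φ y = 0) ∧
    (∀ x y, x ≤ y → x ∈ S ∩ T → y ∈ S → y ∉ T → φ x = 0)}
  add_mem' := by
    rintro φ ψ ⟨h1, h2, h3, h4⟩ ⟨g1, g2, g3, g4⟩
    exact ⟨fun x hx => by simp [h1 x hx, g1 x hx],
      fun x y h hx hy => by simp [h2 x y h hx hy, g2 x y h hx hy],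
      fun x y h hy hxT hxS => by simp [h3 x y h hy hxT hxS, g3 x y h hy hxT hxS],
      fun x y h hx hyS hyT => by simp [h4 x y h hx hyS hyT, g4 x y h hx hyS hyT]⟩
  zero_mem' :=
    ⟨fun _ _ => rfl, fun _ _ _ _ _ => rfl, fun _ _ _ _ _ _ => rfl,
      fun _ _ _ _ _ _ => rfl⟩
  smul_mem' := by
    rintro c φ ⟨h1, h2, h3, h4⟩
    exact ⟨fun x hx => by simp [h1 x hx],
      fun x y h hx hy => by simp [h2 x y h hx hy],
      fun x y h hy hxT hxS => by simp [h3 x y h hy hxT hxS],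
      fun x y h hx hyS hyT => by simp [h4 x y h hx hyS hyT]⟩

lemma mem_intervalHom {K : Type*} [Field K] {Q : Type*} [PartialOrder Q] {S T : Set Q}
    {φ : Q → K} :
    φ ∈ intervalHom K S T ↔ ((∀ x, x ∉ S ∩ T → φ x = 0) ∧
    (∀ x y, x ≤ y → x ∈ S ∩ T → y ∈ S ∩ T → φ x = φ y) ∧
    (∀ x y, x ≤ y → y ∈ S ∩ T → x ∈ T → x ∉ S → φ y = 0) ∧
    (∀ x y, x ≤ y → x ∈ S ∩ T → y ∈ S → y ∉ T → φ x = 0)) := Iff.rfl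

/-- `Hom(M[x₁,x₂], M[y₁,y₂])` is one-dimensional if `x₁ ≤ y₁ ≤ x₂ ≤ y₂`
and zero otherwise. -/
theorem hom_interval_modules (K : Type*) [Field K] {Q : Type*} [PartialOrder Q]
    (x₁ x₂ y₁ y₂ : Q) :
    ((x₁ ≤ y₁ ∧ y₁ ≤ x₂ ∧ x₂ ≤ y₂) →
      Module.rank K ↥(intervalHom K (Set.Icc x₁ x₂) (Set.Icc y₁ y₂)) = 1) ∧
    (¬(x₁ ≤ y₁ ∧ y₁ ≤ x₂ ∧ x₂ ≤ y₂) →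
      Module.rank K ↥(intervalHom K (Set.Icc x₁ x₂) (Set.Icc y₁ y₂)) = 0) := by
  set S := Set.Icc x₁ x₂ with hS
  set T := Set.Icc y₁ y₂ with hT
  constructor
  · rintro ⟨h1, h2, h3⟩
    set v : Q → K := Set.indicator (S ∩ T) (fun _ => (1 : K)) with hv
    have hy₁ : y₁ ∈ S ∩ T := ⟨⟨h1, h2⟩, le_refl _, h2.trans h3⟩
    have hvne : v ≠ 0 := by
      intro h
      have := congrFun h y₁
      rw [hv, Set.indicator_of_mem hy₁] at this
      simpa using this
    have hvmem : v ∈ intervalHom K S T := by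
      rw [mem_intervalHom]
      refine ⟨fun x hx => Set.indicator_of_notMem hx _, ?_, ?_, ?_⟩
      · intro x y _ hx hy
        rw [hv, Set.indicator_of_mem hx, Set.indicator_of_mem hy]
      · intro x y hxy hy hxT hxS
        exact absurd ⟨h1.trans hxT.1, hxy.trans hy.1.2⟩ hxS
      · intro x y hxy hx hyS hyT
        exact absurd ⟨hx.2.1.trans hxy, hyS.2.trans h3⟩ hyT
    have heq : intervalHom K S T = K ∙ v := by
      apply le_antisymm
      · intro φ hφ
        rw [mem_intervalHom] at hφ
        obtain ⟨g1, g2, g3, g4⟩ := hφ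
        rw [Submodule.mem_span_singleton]
        refine ⟨φ y₁, ?_⟩
        funext x
        by_cases hx : x ∈ S ∩ T
        · have : φ y₁ = φ x := g2 y₁ x hx.2.1 hy₁ hx
          simp [hv, Set.indicator_of_mem hx, this]
        · simp [hv, Set.indicator_of_notMem hx, g1 x hx]
      · rwa [Submodule.span_singleton_le_iff_mem]
    rw [heq, Module.rank_eq_one_iff_finrank_eq_one, finrank_span_singleton hvne]
  · intro h
    have heq : intervalHom K S T = ⊥ := by
      rw [eq_bot_iff]
      intro φ hφ
      rw [mem_intervalHom] at hφ
      obtain ⟨g1, g2, g3, g4⟩ := hφ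
      rw [Submodule.mem_bot]
      funext x
      by_cases hx : x ∈ S ∩ T
      · obtain ⟨⟨hx1, hx2⟩, hy1, hy2⟩ := hx
        by_cases hxy1 : x₁ ≤ y₁
        · by_cases hxy2 : x₂ ≤ y₂
          · exact absurd ⟨hxy1, hy1.trans hx2, hxy2⟩ h
          · have : φ x = 0 := g4 x x₂ hx2 ⟨⟨hx1, hx2⟩, hy1, hy2⟩ ⟨hx1.trans hx2, le_refl _⟩
              (fun hc => hxy2 hc.2)
            simpa using this
        · have : φ x = 0 := g3 y₁ x hy1 ⟨⟨hx1, hx2⟩, hy1, hy2⟩ ⟨le_refl _, hy1.trans hy2⟩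
            (fun hc => hxy1 hc.1)
          simpa using this
      · simpa using g1 x hx
    rw [heq, rank_bot]
end

section
/- Let P be a poset, d a positive integer, and x, y ∈ P^d. Then x interlaces y (i.e., x₁ ≤ y₁ ≤ x₂ ≤ y₂ ≤ ⋯ ≤ x_d ≤ y_d) if and only if x ⪯ y in the product order and every z ∈ P^d with x ⪯ z ⪯ y is an ordered sequence (i.e., z₁ ≤ z₂ ≤ ⋯ ≤ z_d). -/
/-- `x` interlaces `y`: `x₁ ≤ y₁ ≤ x₂ ≤ y₂ ≤ ⋯ ≤ x_d ≤ y_d`. -/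
def Interlaces {P : Type*} [PartialOrder P] {d : ℕ} (x y : Fin d → P) : Prop :=
  (∀ i, x i ≤ y i) ∧ ∀ (i : ℕ) (h : i + 1 < d), y ⟨i, Nat.lt_of_succ_lt h⟩ ≤ x ⟨i + 1, h⟩

private lemma monotone_of_adjacent {P : Type*} [PartialOrder P] {d : ℕ} (f : Fin d → P)
    (h : ∀ (i : ℕ) (h : i + 1 < d), f ⟨i, Nat.lt_of_succ_lt h⟩ ≤ f ⟨i + 1, h⟩) :
    Monotone f := by
  intro a b hab
  obtain ⟨k, hk⟩ := Nat.le.dest (show a.val ≤ b.val from hab)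
  induction k generalizing b with
  | zero =>
    have : a = b := Fin.ext (by omega)
    exact this ▸ le_refl _
  | succ n ih =>
    have hb1 : b.val - 1 < d := by omega
    have hstep : f ⟨b.val - 1, hb1⟩ ≤ f b := by
      have h2 : (b.val - 1) + 1 < d := by omega
      have heq : (⟨b.val - 1 + 1, h2⟩ : Fin d) = b := Fin.ext (by simp; omega)
      have := h (b.val - 1) h2
      rwa [heq] at this
    have := ih (b := ⟨b.val - 1, hb1⟩) (by simp [Fin.le_def]; omega) (by simp; omega)
    exact le_trans this hstep

/-- `x ↝ y` iff `x ⪯ y` in the product order and every `z` with `x ⪯ z ⪯ y`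
is an ordered sequence. -/
theorem interlaces_iff_interval_ordered {P : Type*} [PartialOrder P] {d : ℕ} (hd : 0 < d)
    (x y : Fin d → P) :
    Interlaces x y ↔
      (x ≤ y ∧ ∀ z : Fin d → P, x ≤ z → z ≤ y → Monotone z) := by
  constructor
  · rintro ⟨h1, h2⟩
    refine ⟨h1, fun z hxz hzy => monotone_of_adjacent z fun i hi => ?_⟩
    exact le_trans (hzy _) (le_trans (h2 i hi) (hxz _))
  · rintro ⟨hxy, h⟩
    refine ⟨hxy, fun i hi => ?_⟩
    set a : Fin d := ⟨i, Nat.lt_of_succ_lt hi⟩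
    set b : Fin d := ⟨i + 1, hi⟩
    set z : Fin d → P := fun j => if j ≤ a then y j else x j with hz
    have hxz : x ≤ z := fun j => by
      by_cases hj : j ≤ a <;> simp [hz, hj, hxy j]
    have hzy : z ≤ y := fun j => by
      by_cases hj : j ≤ a <;> simp [hz, hj, hxy j]
    have := h z hxz hzy (show a ≤ b from by simp [a, b, Fin.le_def])
    simpa [hz, a, b, Fin.le_def] using this
end

section
/- Let ℓ be a Kupisch series of type A_n, d ≥ 1, and λ ∈ os_ℓ^{d+1} (i.e., λ is an ordered sequence 0 ≤ λ₁ ≤ ⋯ ≤ λ_{d+1} ≤ n−1 with λ_{d+1} − λ₁ + 1 ≤ ℓ_{λ_{d+1}}). If μ is an ordered sequence with λ₁ ≤ μ₁ ≤ λ₂ ≤ μ₂ ≤ ⋯ ≤ λ_d ≤ μ_d ≤ λ_{d+1}, then μ ∈ os_ℓ^d, i.e., μ_d − μ₁ + 1 ≤ ℓ_{μ_d}. -/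
/-- A Kupisch series of type `A_n`: `ℓ₀ = 1` and `2 ≤ ℓ_i ≤ ℓ_{i-1} + 1` for `i ≥ 1`. -/
def IsKupischA (n : ℕ) (l : Fin n → ℕ) : Prop :=
  (∀ h : 0 < n, l ⟨0, h⟩ = 1) ∧
  ∀ (i : ℕ) (h : i + 1 < n), 2 ≤ l ⟨i + 1, h⟩ ∧ l ⟨i + 1, h⟩ ≤ l ⟨i, Nat.lt_of_succ_lt h⟩ + 1

/-- If `λ ∈ os_ℓ^{d+1}` and `μ` is an ordered sequence with
`λ₁ ≤ μ₁ ≤ λ₂ ≤ μ₂ ≤ ⋯ ≤ λ_d ≤ μ_d ≤ λ_{d+1}`, then `μ ∈ os_ℓ^d`. -/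
theorem composition_factor_mem_os {n d : ℕ} (hd : 0 < d)
    (l : Fin n → ℕ) (hl : IsKupischA n l)
    (lam : Fin (d + 1) → Fin n) (hmono : Monotone lam)
    (hlen : (lam (Fin.last d)).val - (lam 0).val + 1 ≤ l (lam (Fin.last d)))
    (mu : Fin d → Fin n)
    (hint : ∀ i : Fin d, lam i.castSucc ≤ mu i ∧ mu i ≤ lam i.succ) :
    (mu ⟨d - 1, by omega⟩).val - (mu ⟨0, hd⟩).val + 1 ≤ l (mu ⟨d - 1, by omega⟩) := by
  have key : ∀ (k : ℕ) (hk : k < n) (j : ℕ) (hj : j ≤ k),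
      l ⟨k, hk⟩ ≤ l ⟨j, lt_of_le_of_lt hj hk⟩ + (k - j) := by
    intro k
    induction k with
    | zero => intro hk j hj; interval_cases j; simp
    | succ m ih =>
      intro hk j hj
      rcases Nat.eq_or_lt_of_le hj with h | h
      · subst h; simp
      · have hj' : j ≤ m := by omega
        have := ih (Nat.lt_of_succ_lt hk) j hj'
        have h2 := (hl.2 m hk).2
        omega
  set i0 : Fin d := ⟨0, hd⟩
  set i1 : Fin d := ⟨d - 1, by omega⟩
  have hc0 : i0.castSucc = (0 : Fin (d + 1)) := by
    ext; simp [i0]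
  have hs1 : i1.succ = Fin.last d := by
    ext; simp [i1]; omega
  have h1 : (lam 0).val ≤ (mu i0).val := by
    have := (hint i0).1; rw [hc0] at this; exact this
  have h2 : (mu i1).val ≤ (lam (Fin.last d)).val := by
    have := (hint i1).2; rw [hs1] at this; exact this
  have h3 : (lam 0).val ≤ (mu i1).val := by
    have := (hint i1).1
    have h4 : lam 0 ≤ lam i1.castSucc := hmono (Fin.zero_le _)
    exact le_trans h4 this
  have h5 : l (lam (Fin.last d)) ≤ l (mu i1) + ((lam (Fin.last d)).val - (mu i1).val) := by
    have := key (lam (Fin.last d)).val (lam (Fin.last d)).isLt (mu i1).val h2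
    simpa using this
  omega
end

section
/- Let ℓ be a Kupisch series of type A_n, d ≥ 1, and λ ∈ os_ℓ^d. Setting x := λ_d + 1 − ℓ_{λ_d}, one has 0 ≤ x ≤ λ₁ and (x, λ₁, …, λ_d) ∈ os_ℓ^{d+1}. Moreover, x is the minimum over all x' with 0 ≤ x' ≤ λ₁ such that (x', λ₁, …, λ_d) ∈ os_ℓ^{d+1}. -/
lemma kupisch_bounds {n : ℕ} {l : Fin n → ℕ} (hl : IsKupischA n l) :
    ∀ i : Fin n, 1 ≤ l i ∧ l i ≤ i.val + 1 := by
  intro ⟨i, hi⟩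
  induction i with
  | zero => simp [hl.1 (by omega)]
  | succ k ih =>
    have h := hl.2 k hi
    have := ih (Nat.lt_of_succ_lt hi)
    simp only [Fin.val_mk] at *
    omega

/-- For `λ ∈ os_ℓ^d` and `x := λ_d + 1 − ℓ_{λ_d}`: `0 ≤ x ≤ λ₁`,
`(x, λ₁, …, λ_d) ∈ os_ℓ^{d+1}`, and `x` is minimal with this property. -/
theorem projective_cover_os {n d : ℕ} (hd : 0 < d)
    (l : Fin n → ℕ) (hl : IsKupischA n l)
    (lam : Fin d → Fin n) (hmono : Monotone lam)
    (hlen : (lam ⟨d - 1, by omega⟩).val - (lam ⟨0, hd⟩).val + 1 ≤ l (lam ⟨d - 1, by omega⟩))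
    (x : ℕ)
    (hx : (x : ℤ) = ((lam ⟨d - 1, by omega⟩).val : ℤ) + 1 - (l (lam ⟨d - 1, by omega⟩) : ℤ)) :
    (0 : ℤ) ≤ ((lam ⟨d - 1, by omega⟩).val : ℤ) + 1 - (l (lam ⟨d - 1, by omega⟩) : ℤ) ∧
    x ≤ (lam ⟨0, hd⟩).val ∧
    (lam ⟨d - 1, by omega⟩).val - x + 1 ≤ l (lam ⟨d - 1, by omega⟩) ∧
    ∀ x' : ℕ, x' ≤ (lam ⟨0, hd⟩).val →
      (lam ⟨d - 1, by omega⟩).val - x' + 1 ≤ l (lam ⟨d - 1, by omega⟩) → x ≤ x' := by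
  have hb := kupisch_bounds hl (lam ⟨d - 1, by omega⟩)
  have hle : (lam ⟨0, hd⟩).val ≤ (lam ⟨d - 1, by omega⟩).val :=
    hmono (Fin.mk_le_mk.mpr (Nat.zero_le _))
  refine ⟨by omega, by omega, by omega, fun x' h1 h2 => by omega⟩
end

section
/- Let ℓ be a Kupisch series of type A_n and λ ∈ os_ℓ^{d+1} with λ₁ > λ_{d+1} + 1 − ℓ_{λ_{d+1}} (i.e., the corresponding module is non-projective). Setting x := λ_{d+1} + 1 − ℓ_{λ_{d+1}}, the tuple (x, λ₁−1, …, λ_d−1) is again in os_ℓ^{d+1}; that is, the set os_ℓ^{d+1} is closed under the 'd-th syzygy' operation λ ↦ (x, λ₁−1, …, λ_d−1). -/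
lemma kupisch_step {n : ℕ} (l : Fin n → ℕ)
    (hl : ∀ (i : ℕ) (h : i + 1 < n), l ⟨i + 1, h⟩ ≤ l ⟨i, Nat.lt_of_succ_lt h⟩ + 1) :
    ∀ (k i : ℕ) (h : i + k < n), l ⟨i + k, h⟩ ≤ l ⟨i, by omega⟩ + k := by
  intro k
  induction k with
  | zero => intro i h; simp
  | succ k ih =>
    intro i h
    have h1 : i + k + 1 < n := by omega
    have h2 := hl (i + k) h1
    have h3 := ih i (by omega)
    have he : (⟨i + (k + 1), h⟩ : Fin n) = ⟨i + k + 1, h1⟩ := rfl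
    rw [he]
    omega

/-- For `λ ∈ os_ℓ^{d+1}` non-projective (i.e. `λ₁ > x := λ_{d+1} + 1 − ℓ_{λ_{d+1}}`),
the `d`-th syzygy tuple `(x, λ₁−1, …, λ_d−1)` again lies in `os_ℓ^{d+1}`: one has
`0 ≤ x ≤ λ₁ − 1` and `(λ_d − 1) − x + 1 ≤ ℓ_{λ_d − 1}`. -/
theorem syzygy_mem_os {n d : ℕ} (hd : 0 < d)
    (l : Fin n → ℕ) (hl : IsKupischA n l)
    (lam : Fin (d + 1) → Fin n) (hmono : Monotone lam)
    (hlen : (lam (Fin.last d)).val - (lam 0).val + 1 ≤ l (lam (Fin.last d)))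
    (x : ℕ)
    (hx : (x : ℤ) = ((lam (Fin.last d)).val : ℤ) + 1 - (l (lam (Fin.last d)) : ℤ))
    (hproj : x + 1 ≤ (lam 0).val) :
    x ≤ (lam 0).val - 1 ∧
    1 ≤ (lam ⟨d - 1, by omega⟩).val ∧
    (lam ⟨d - 1, by omega⟩).val - 1 - x + 1 ≤
      l ⟨(lam ⟨d - 1, by omega⟩).val - 1,
        lt_of_le_of_lt (Nat.sub_le _ _) (lam ⟨d - 1, by omega⟩).isLt⟩ := by
  set a := lam ⟨d - 1, by omega⟩ with ha
  set b := lam (Fin.last d) with hb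
  have h0a : (lam 0).val ≤ a.val := by
    exact hmono (by simp [Fin.le_def])
  have hab : a.val ≤ b.val := by
    exact hmono (by simp [Fin.le_def, Fin.last])
  have ha1 : 1 ≤ a.val := by omega
  refine ⟨by omega, ha1, ?_⟩
  -- apply kupisch_step with i = a.val - 1, k = b.val - (a.val - 1)
  have hstep := kupisch_step l (fun i h => (hl.2 i h).2)
    (b.val - (a.val - 1)) (a.val - 1) (by omega)
  have hbval : (⟨a.val - 1 + (b.val - (a.val - 1)), by omega⟩ : Fin n) = b := by
    ext; simp; omega
  rw [hbval] at hstep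
  have hx' : x + l b = b.val + 1 := by omega
  omega
end

section
/- Let ℓ be a Kupisch series of type A_n and λ ∈ os_ℓ^{d+1} with λ₁ ≥ 1 and λ_{d+1} − λ₁ + 1 ≤ ℓ_{λ_{d+1}} − 1 (so M(λ) is non-projective). Then τ_d(λ) := (λ₁−1, …, λ_{d+1}−1) lies in os_ℓ^{d+1}, and moreover every μ in the product-order interval [τ_d(λ), λ] ⊆ os^{d+1} lies in os_ℓ^{d+1}. -/
/-- If `λ ∈ os_ℓ^{d+1}` with `λ₁ ≥ 1` and `len(λ) ≤ ℓ_{λ_{d+1}} − 1`, then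
`τ_d(λ) = (λ₁−1,…,λ_{d+1}−1)` lies in `os_ℓ^{d+1}` and so does every `μ`
in the product-order interval `[τ_d(λ), λ]`. -/
theorem tau_interval_mem_os {n d : ℕ}
    (l : Fin n → ℕ) (hl : IsKupischA n l)
    (lam : Fin (d + 1) → Fin n) (hmono : Monotone lam)
    (h1 : 1 ≤ (lam 0).val)
    (hlen : (lam (Fin.last d)).val - (lam 0).val + 1 + 1 ≤ l (lam (Fin.last d))) :
    ((lam (Fin.last d)).val - 1 - ((lam 0).val - 1) + 1 ≤
      l ⟨(lam (Fin.last d)).val - 1,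
        lt_of_le_of_lt (Nat.sub_le _ _) (lam (Fin.last d)).isLt⟩) ∧
    ∀ mu : Fin (d + 1) → Fin n, Monotone mu →
      (∀ i, (lam i).val - 1 ≤ (mu i).val ∧ mu i ≤ lam i) →
      (mu (Fin.last d)).val - (mu 0).val + 1 ≤ l (mu (Fin.last d)) := by
  obtain ⟨h0, hstep⟩ := hl
  have hab : (lam 0).val ≤ (lam (Fin.last d)).val := hmono (Fin.zero_le _)
  have hb1 : 1 ≤ (lam (Fin.last d)).val := le_trans h1 hab
  have hbn : (lam (Fin.last d)).val < n := (lam (Fin.last d)).isLt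
  have hbig : ((lam (Fin.last d)).val - 1) + 1 < n := by omega
  have hkey : l (lam (Fin.last d)) ≤
      l ⟨(lam (Fin.last d)).val - 1,
        lt_of_le_of_lt (Nat.sub_le _ _) (lam (Fin.last d)).isLt⟩ + 1 := by
    have hs := (hstep ((lam (Fin.last d)).val - 1) hbig).2
    have e1 : lam (Fin.last d) = ⟨((lam (Fin.last d)).val - 1) + 1, hbig⟩ := by
      apply Fin.ext; simp; omega
    rw [e1]
    exact hs
  refine ⟨by omega, ?_⟩
  intro mu hmu hbound
  have h0' := (hbound 0).1
  have hl1 := (hbound (Fin.last d)).1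
  have hl2 := (hbound (Fin.last d)).2
  rw [Fin.le_def] at hl2
  have hmm : (mu 0).val ≤ (mu (Fin.last d)).val := hmu (Fin.zero_le _)
  rcases Nat.lt_or_ge (mu (Fin.last d)).val (lam (Fin.last d)).val with hlt | hge
  · have e : mu (Fin.last d) = ⟨(lam (Fin.last d)).val - 1,
        lt_of_le_of_lt (Nat.sub_le _ _) (lam (Fin.last d)).isLt⟩ := by
      apply Fin.ext; simp; omega
    rw [e]
    omega
  · have e : mu (Fin.last d) = lam (Fin.last d) := by
      apply Fin.ext; omega
    rw [e]
    omega
end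

section
/- Fix integers ℓ ≥ 2 and d ≥ 1, and let S: os_{ℤℓ}^{d+1} → os_{ℤℓ}^{d+1} be given by S(λ) = (λ₂,…,λ_{d+1}, λ₁+ℓ−1). Then os_{ℓ−1}^{d+1} (the set of ordered sequences 0 ≤ λ₁ ≤ ⋯ ≤ λ_{d+1} ≤ ℓ−2) is a fundamental domain for the action of S: the map os_{ℓ−1}^{d+1} × ℤ → os_{ℤℓ}^{d+1}, (λ, i) ↦ S^i(λ), is bijective. -/
/-- `os_{ℤℓ}^{d+1}`: ordered sequences of `d+1` integers of Loewy length at most `ℓ`. -/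
def OSZ (L d : ℕ) : Set (Fin (d + 1) → ℤ) :=
  {lam | Monotone lam ∧ lam (Fin.last d) - lam 0 + 1 ≤ (L : ℤ)}

/-- `S(λ) = (λ₂, …, λ_{d+1}, λ₁ + ℓ − 1)`, as a permutation of all tuples. -/
def SShiftEquiv (L d : ℕ) : Equiv.Perm (Fin (d + 1) → ℤ) where
  toFun lam := fun i =>
    if h : (i : ℕ) < d then lam ⟨(i : ℕ) + 1, by omega⟩ else lam 0 + (L : ℤ) - 1
  invFun lam := fun i =>
    if h : 0 < (i : ℕ) then lam ⟨(i : ℕ) - 1, by omega⟩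
    else lam (Fin.last d) - (L : ℤ) + 1
  left_inv lam := by
    funext i
    dsimp only
    rcases Nat.eq_zero_or_pos (i : ℕ) with h | h
    · have h0 : i = 0 := Fin.ext h
      subst h0
      rw [dif_neg (by omega), dif_neg (by simp)]
      ring
    · have h1 : (i : ℕ) - 1 < d := by omega
      rw [dif_pos h]
      have h2 : ((⟨(i : ℕ) - 1, by omega⟩ : Fin (d + 1)) : ℕ) < d := h1
      rw [dif_pos h2]
      congr 1
      exact Fin.ext (by simp; omega)
  right_inv lam := by
    funext i
    dsimp only
    rcases Nat.lt_or_ge (i : ℕ) d with h | h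
    · rw [dif_pos h]
      have h1 : 0 < ((⟨(i : ℕ) + 1, by omega⟩ : Fin (d + 1)) : ℕ) := by simp
      rw [dif_pos h1]
      congr 1
      all_goals exact Fin.ext (by simp)
    · have h0 : i = Fin.last d := Fin.ext (by have := i.isLt; simp only [Fin.val_last]; omega)
      subst h0
      rw [dif_neg (by simp)]
      have h1 : 0 < ((0 : Fin (d + 1)) : ℕ) ∨ ¬ 0 < ((0 : Fin (d + 1)) : ℕ) := em _
      rw [dif_neg (by simp)]
      ring

namespace SFund

variable (L d : ℕ)


variable (L d : ℕ)

/-- periodic extension of a tuple to `ℤ`. -/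
def ext (lam : Fin (d + 1) → ℤ) (k : ℤ) : ℤ :=
  lam ⟨(k % ((d : ℤ) + 1)).toNat, by
    have h1 := Int.emod_nonneg k (by positivity : ((d : ℤ) + 1) ≠ 0)
    have h2 := Int.emod_lt_of_pos k (by positivity : (0 : ℤ) < (d : ℤ) + 1)
    omega⟩ + (k / ((d : ℤ) + 1)) * ((L : ℤ) - 1)

lemma emod_mem (k : ℤ) : 0 ≤ k % ((d : ℤ) + 1) ∧ k % ((d : ℤ) + 1) ≤ (d : ℤ) := by
  have h1 := Int.emod_nonneg k (by positivity : ((d : ℤ) + 1) ≠ 0)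
  have h2 := Int.emod_lt_of_pos k (by positivity : (0 : ℤ) < (d : ℤ) + 1)
  omega

lemma ext_coe (lam : Fin (d + 1) → ℤ) (j : Fin (d + 1)) :
    ext L d lam ((j : ℕ) : ℤ) = lam j := by
  unfold ext
  have hj : ((j : ℕ) : ℤ) < (d : ℤ) + 1 := by exact_mod_cast j.isLt
  have h1 : ((j : ℕ) : ℤ) % ((d : ℤ) + 1) = ((j : ℕ) : ℤ) :=
    Int.emod_eq_of_lt (by positivity) hj
  have h2 : ((j : ℕ) : ℤ) / ((d : ℤ) + 1) = 0 :=
    Int.ediv_eq_zero_of_lt (by positivity) hj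
  rw [h2, zero_mul, add_zero]
  exact congrArg lam (Fin.ext (by simp only [Fin.val_mk, Fin.val_zero]; omega))

lemma ext_zero (lam : Fin (d + 1) → ℤ) : ext L d lam 0 = lam 0 := by
  have := ext_coe L d lam 0
  simpa using this

lemma ext_d (lam : Fin (d + 1) → ℤ) : ext L d lam ((d : ℕ) : ℤ) = lam (Fin.last d) := by
  have := ext_coe L d lam (Fin.last d)
  simpa using this

lemma ext_succ (lam : Fin (d + 1) → ℤ) (k : ℤ) :
    ext L d lam (k + 1) =
      if h : (k % ((d : ℤ) + 1)).toNat < d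
      then lam ⟨(k % ((d : ℤ) + 1)).toNat + 1, by omega⟩ + (k / ((d : ℤ) + 1)) * ((L : ℤ) - 1)
      else lam 0 + (k / ((d : ℤ) + 1) + 1) * ((L : ℤ) - 1) := by
  have hr := emod_mem d k
  have hkey := Int.mul_ediv_add_emod k ((d : ℤ) + 1)
  by_cases h : (k % ((d : ℤ) + 1)).toNat < d
  · rw [dif_pos h]
    have e1 : k + 1 = (k % ((d : ℤ) + 1) + 1) + ((d : ℤ) + 1) * (k / ((d : ℤ) + 1)) := by omega
    have h1 : (k + 1) % ((d : ℤ) + 1) = k % ((d : ℤ) + 1) + 1 := by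
      rw [e1, Int.add_mul_emod_self_left, Int.emod_eq_of_lt (by omega) (by omega)]
    have h2 : (k + 1) / ((d : ℤ) + 1) = k / ((d : ℤ) + 1) := by
      rw [e1, Int.add_mul_ediv_left _ _ (by positivity : ((d : ℤ) + 1) ≠ 0),
        Int.ediv_eq_zero_of_lt (by omega) (by omega), zero_add]
    unfold ext
    rw [h2]
    congr 1
    exact congrArg lam (Fin.ext (by simp only [Fin.val_mk, Fin.val_zero]; omega))
  · rw [dif_neg h]
    have hexp : ((d : ℤ) + 1) * (k / ((d : ℤ) + 1) + 1)
        = ((d : ℤ) + 1) * (k / ((d : ℤ) + 1)) + ((d : ℤ) + 1) := by ring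
    have e1 : k + 1 = 0 + ((d : ℤ) + 1) * (k / ((d : ℤ) + 1) + 1) := by omega
    have h1 : (k + 1) % ((d : ℤ) + 1) = 0 := by
      rw [e1, Int.add_mul_emod_self_left]; simp
    have h2 : (k + 1) / ((d : ℤ) + 1) = k / ((d : ℤ) + 1) + 1 := by
      rw [e1, Int.add_mul_ediv_left _ _ (by positivity : ((d : ℤ) + 1) ≠ 0)]; simp
    unfold ext
    rw [h2]
    congr 1
    exact congrArg lam (Fin.ext (by simp only [Fin.val_mk, Fin.val_zero]; omega))

lemma ext_period_one (lam : Fin (d + 1) → ℤ) (k : ℤ) :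
    ext L d lam (k + ((d : ℤ) + 1)) = ext L d lam k + ((L : ℤ) - 1) := by
  have e1 : k + ((d : ℤ) + 1) = k + ((d : ℤ) + 1) * 1 := by ring
  have h1 : (k + ((d : ℤ) + 1)) % ((d : ℤ) + 1) = k % ((d : ℤ) + 1) := by
    rw [e1, Int.add_mul_emod_self_left]
  have h2 : (k + ((d : ℤ) + 1)) / ((d : ℤ) + 1) = k / ((d : ℤ) + 1) + 1 := by
    rw [e1, Int.add_mul_ediv_left _ _ (by positivity : ((d : ℤ) + 1) ≠ 0)]
  unfold ext
  rw [h2]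
  have h3 := congrArg lam (Fin.ext (n := d + 1)
    (a := ⟨((k + ((d : ℤ) + 1)) % ((d : ℤ) + 1)).toNat, by
      have := emod_mem d (k + ((d : ℤ) + 1)); omega⟩)
    (b := ⟨(k % ((d : ℤ) + 1)).toNat, by have := emod_mem d k; omega⟩) (by simp only [Fin.val_mk, Fin.val_zero]; omega))
  rw [h3]; ring


lemma ext_shift (lam : Fin (d + 1) → ℤ) (k : ℤ) :
    ext L d (SShiftEquiv L d lam) k = ext L d lam (k + 1) := by
  rw [ext_succ]
  have hr := emod_mem d k
  show (SShiftEquiv L d lam) ⟨(k % ((d : ℤ) + 1)).toNat, _⟩ + _ = _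
  simp only [SShiftEquiv, Equiv.coe_fn_mk]
  by_cases h : (k % ((d : ℤ) + 1)).toNat < d
  · rw [dif_pos h, dif_pos h]
  · rw [dif_neg h, dif_neg h]
    ring

lemma ext_shift_inv (lam : Fin (d + 1) → ℤ) (k : ℤ) :
    ext L d ((SShiftEquiv L d)⁻¹ lam) k = ext L d lam (k - 1) := by
  have h := ext_shift L d ((SShiftEquiv L d)⁻¹ lam) (k - 1)
  rw [show (SShiftEquiv L d) ((SShiftEquiv L d)⁻¹ lam) = lam from Equiv.apply_symm_apply _ _, sub_add_cancel] at h
  exact h.symm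

lemma ext_zpow (n : ℤ) : ∀ (lam : Fin (d + 1) → ℤ) (k : ℤ),
    ext L d ((SShiftEquiv L d ^ n) lam) k = ext L d lam (k + n) := by
  induction n using Int.induction_on with
  | zero => intro lam k; simp
  | succ m ih =>
    intro lam k
    have h : (SShiftEquiv L d ^ ((m : ℤ) + 1)) lam
        = (SShiftEquiv L d ^ (m : ℤ)) (SShiftEquiv L d lam) := by
      rw [zpow_add_one]; rfl
    rw [h, ih, ext_shift]
    congr 1; ring
  | pred m ih =>
    intro lam k
    have h : (SShiftEquiv L d ^ (-(m : ℤ) - 1)) lam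
        = (SShiftEquiv L d ^ (-(m : ℤ))) ((SShiftEquiv L d)⁻¹ lam) := by
      rw [zpow_sub_one]; rfl
    rw [h, ih, ext_shift_inv]
    congr 1; ring

lemma zpow_apply (n : ℤ) (lam : Fin (d + 1) → ℤ) (j : Fin (d + 1)) :
    ((SShiftEquiv L d ^ n) lam) j = ext L d lam (((j : ℕ) : ℤ) + n) := by
  rw [← ext_coe L d ((SShiftEquiv L d ^ n) lam) j, ext_zpow]

lemma ext_period (n : ℤ) (lam : Fin (d + 1) → ℤ) (k : ℤ) :
    ext L d lam (k + n * ((d : ℤ) + 1)) = ext L d lam k + n * ((L : ℤ) - 1) := by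
  induction n using Int.induction_on with
  | zero => simp
  | succ m ih =>
    have e : k + ((m : ℤ) + 1) * ((d : ℤ) + 1)
        = (k + (m : ℤ) * ((d : ℤ) + 1)) + ((d : ℤ) + 1) := by ring
    rw [e, ext_period_one, ih]; ring
  | pred m ih =>
    have h2 := ext_period_one L d lam (k + (-(m : ℤ) - 1) * ((d : ℤ) + 1))
    have e : k + (-(m : ℤ) - 1) * ((d : ℤ) + 1) + ((d : ℤ) + 1)
        = k + (-(m : ℤ)) * ((d : ℤ) + 1) := by ring
    rw [e, ih] at h2
    linarith [h2]

lemma ext_mono {lam : Fin (d + 1) → ℤ} (h : lam ∈ OSZ L d) :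
    Monotone (ext L d lam) := by
  apply monotone_int_of_le_succ
  intro k
  have hr := emod_mem d k
  rw [ext_succ]
  by_cases hc : (k % ((d : ℤ) + 1)).toNat < d
  · rw [dif_pos hc]
    unfold ext
    have hle : (⟨(k % ((d : ℤ) + 1)).toNat, by omega⟩ : Fin (d + 1))
        ≤ ⟨(k % ((d : ℤ) + 1)).toNat + 1, by omega⟩ := by
      simp [Fin.mk_le_mk]
    exact add_le_add_left (h.1 hle) _
  · rw [dif_neg hc]
    unfold ext
    have he : (⟨(k % ((d : ℤ) + 1)).toNat, by omega⟩ : Fin (d + 1)) = Fin.last d :=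
      Fin.ext (by simp only [Fin.val_mk, Fin.val_last]; omega)
    rw [he]
    have := h.2
    nlinarith [h.2]

lemma D_subset_OSZ {lam : Fin (d + 1) → ℤ}
    (h : lam ∈ {lam : Fin (d + 1) → ℤ | Monotone lam ∧ ∀ i, 0 ≤ lam i ∧ lam i ≤ (L : ℤ) - 2}) :
    lam ∈ OSZ L d := by
  obtain ⟨h1, h2⟩ := h
  refine ⟨h1, ?_⟩
  have ha := (h2 0).1
  have hb := (h2 (Fin.last d)).2
  omega

lemma ext_neg_one {lam : Fin (d + 1) → ℤ} : ext L d lam (-1) = lam (Fin.last d) - ((L : ℤ) - 1) := by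
  have h := ext_period_one L d lam (-1)
  have e : (-1 : ℤ) + ((d : ℤ) + 1) = ((d : ℕ) : ℤ) := by ring
  rw [e, ext_d] at h
  omega

lemma ext_nonneg_iff {lam : Fin (d + 1) → ℤ} (hL : 2 ≤ L)
    (h : lam ∈ {lam : Fin (d + 1) → ℤ | Monotone lam ∧ ∀ i, 0 ≤ lam i ∧ lam i ≤ (L : ℤ) - 2})
    (k : ℤ) : 0 ≤ ext L d lam k ↔ 0 ≤ k := by
  have hm := ext_mono L d (D_subset_OSZ L d h)
  have h0 : 0 ≤ ext L d lam 0 := by rw [ext_zero]; exact (h.2 0).1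
  have hneg : ext L d lam (-1) ≤ -1 := by
    rw [ext_neg_one]
    have := (h.2 (Fin.last d)).2
    omega
  constructor
  · intro hk
    by_contra hcon
    push_neg at hcon
    have : ext L d lam k ≤ ext L d lam (-1) := hm (by omega)
    omega
  · intro hk
    have : ext L d lam 0 ≤ ext L d lam k := hm hk
    omega

end SFund

/-- `os_{ℓ−1}^{d+1}` (ordered sequences with entries in `{0,…,ℓ−2}`) is a fundamental
domain for the action of `S` on `os_{ℤℓ}^{d+1}`: the map `(λ, i) ↦ S^i(λ)` is a
bijection onto `os_{ℤℓ}^{d+1}`. -/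
theorem sshift_fundamental_domain (L d : ℕ) (hL : 2 ≤ L) :
    Set.BijOn (fun p : (Fin (d + 1) → ℤ) × ℤ => ((SShiftEquiv L d) ^ p.2) p.1)
      ({lam | Monotone lam ∧ ∀ i, 0 ≤ lam i ∧ lam i ≤ (L : ℤ) - 2} ×ˢ (Set.univ : Set ℤ))
      (OSZ L d) := by
  classical
  refine ⟨?_, ?_, ?_⟩
  · -- MapsTo
    rintro ⟨kap, n⟩ ⟨hD, -⟩
    dsimp only
    have hOSZ := SFund.D_subset_OSZ L d hD
    have hm := SFund.ext_mono L d hOSZ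
    constructor
    · intro j j' hjj'
      rw [SFund.zpow_apply, SFund.zpow_apply]
      apply hm
      have : ((j : ℕ) : ℤ) ≤ ((j' : ℕ) : ℤ) := by exact_mod_cast hjj'
      omega
    · rw [SFund.zpow_apply, SFund.zpow_apply]
      have h1 : SFund.ext L d kap ((n - 1) + ((d : ℤ) + 1))
          = SFund.ext L d kap (n - 1) + ((L : ℤ) - 1) := SFund.ext_period_one L d kap (n - 1)
      have e : (n - 1) + ((d : ℤ) + 1) = (((Fin.last d : Fin (d + 1)) : ℕ) : ℤ) + n := by
        simp [Fin.val_last]; ring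
      rw [e] at h1
      have h2 : SFund.ext L d kap (n - 1) ≤ SFund.ext L d kap ((((0 : Fin (d + 1)) : ℕ) : ℤ) + n) := by
        apply hm
        simp
      omega
  · -- InjOn
    rintro ⟨kap, n⟩ ⟨hD, -⟩ ⟨kap', n'⟩ ⟨hD', -⟩ heq
    simp only at heq
    have Hfin : ∀ j : Fin (d + 1),
        SFund.ext L d kap (((j : ℕ) : ℤ) + n) = SFund.ext L d kap' (((j : ℕ) : ℤ) + n') := by
      intro j
      rw [← SFund.zpow_apply, ← SFund.zpow_apply, heq]
    have Hall : ∀ k : ℤ, SFund.ext L d kap (k + n) = SFund.ext L d kap' (k + n') := by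
      intro k
      have hr := SFund.emod_mem d k
      have hkey := Int.mul_ediv_add_emod k ((d : ℤ) + 1)
      set r := k % ((d : ℤ) + 1) with hrdef
      set q := k / ((d : ℤ) + 1) with hqdef
      have hj := Hfin ⟨r.toNat, by omega⟩
      simp only [Fin.val_mk] at hj
      rw [Int.toNat_of_nonneg hr.1] at hj
      have hcomm : q * ((d : ℤ) + 1) = ((d : ℤ) + 1) * q := mul_comm _ _
      have e1 : k + n = (r + n) + q * ((d : ℤ) + 1) := by omega
      have e2 : k + n' = (r + n') + q * ((d : ℤ) + 1) := by omega
      rw [e1, e2, SFund.ext_period, SFund.ext_period, hj]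
    have hnn' : n = n' := by
      have h1 := Hall (-n')
      have h2 := Hall (-n)
      rw [show (-n' + n') = 0 by ring] at h1
      rw [show (-n + n) = 0 by ring] at h2
      have a1 : 0 ≤ SFund.ext L d kap (-n' + n) := by
        rw [h1, SFund.ext_zero]; exact (hD'.2 0).1
      have a2 : 0 ≤ SFund.ext L d kap' (-n + n') := by
        rw [← h2, SFund.ext_zero]; exact (hD.2 0).1
      have b1 := (SFund.ext_nonneg_iff L d hL hD (-n' + n)).mp a1
      have b2 := (SFund.ext_nonneg_iff L d hL hD' (-n + n')).mp a2
      omega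
    subst hnn'
    have hk : kap = kap' := by
      funext j
      have h := Hall (((j : ℕ) : ℤ) - n)
      rw [show ((j : ℕ) : ℤ) - n + n = ((j : ℕ) : ℤ) by ring] at h
      rw [SFund.ext_coe, SFund.ext_coe] at h
      exact h
    rw [hk]
  · -- SurjOn
    intro lam hlam
    have hm := SFund.ext_mono L d hlam
    have hL1 : (1 : ℤ) ≤ (L : ℤ) - 1 := by
      have : (2 : ℤ) ≤ (L : ℤ) := by exact_mod_cast hL
      omega
    -- the predicate
    set P : ℤ → Prop := fun z => 0 ≤ SFund.ext L d lam z with hP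
    have Hinh : ∃ z, P z := by
      refine ⟨|lam 0| * ((d : ℤ) + 1), ?_⟩
      have h := SFund.ext_period L d |lam 0| lam 0
      rw [zero_add] at h
      show 0 ≤ SFund.ext L d lam _
      rw [h, SFund.ext_zero]
      have hprod : |lam 0| * 1 ≤ |lam 0| * ((L : ℤ) - 1) :=
        mul_le_mul_of_nonneg_left hL1 (abs_nonneg _)
      have := neg_abs_le (lam 0)
      linarith
    have Hbdd : ∃ b : ℤ, ∀ z, P z → b ≤ z := by
      refine ⟨-(|lam 0| + 1) * ((d : ℤ) + 1), ?_⟩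
      intro z hz
      by_contra hcon
      push_neg at hcon
      have h := SFund.ext_period L d (-(|lam 0| + 1)) lam 0
      rw [zero_add] at h
      have hb : SFund.ext L d lam (-(|lam 0| + 1) * ((d : ℤ) + 1)) < 0 := by
        rw [h, SFund.ext_zero]
        have hprod : (|lam 0| + 1) * 1 ≤ (|lam 0| + 1) * ((L : ℤ) - 1) :=
          mul_le_mul_of_nonneg_left hL1 (by positivity)
        have := le_abs_self (lam 0)
        linarith
      have : SFund.ext L d lam z ≤ SFund.ext L d lam (-(|lam 0| + 1) * ((d : ℤ) + 1)) :=
        hm (by omega)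
      have hz' : 0 ≤ SFund.ext L d lam z := hz
      omega
    obtain ⟨c, hc, hleast⟩ := Int.exists_least_of_bdd Hbdd Hinh
    have hc1 : SFund.ext L d lam (c - 1) ≤ -1 := by
      by_contra hcon
      push_neg at hcon
      have : P (c - 1) := by show 0 ≤ _; omega
      have := hleast _ this
      omega
    refine ⟨((SShiftEquiv L d ^ c) lam, -c), ⟨?_, trivial⟩, ?_⟩
    · -- in D
      dsimp only
      constructor
      · intro j j' hjj'
        rw [SFund.zpow_apply, SFund.zpow_apply]
        apply hm
        have : ((j : ℕ) : ℤ) ≤ ((j' : ℕ) : ℤ) := by exact_mod_cast hjj'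
        omega
      · intro i
        rw [SFund.zpow_apply]
        have hdle : ((i : ℕ) : ℤ) ≤ (d : ℤ) := by exact_mod_cast Nat.lt_succ_iff.mp i.isLt
        have hi0 : ((i : ℕ) : ℤ) ≥ 0 := Int.natCast_nonneg _
        constructor
        · have : SFund.ext L d lam c ≤ SFund.ext L d lam (((i : ℕ) : ℤ) + c) := hm (by omega)
          have hc' : 0 ≤ SFund.ext L d lam c := hc
          omega
        · have h1 : SFund.ext L d lam (((i : ℕ) : ℤ) + c) ≤ SFund.ext L d lam ((d : ℤ) + c) :=
            hm (by omega)
          have h2 : SFund.ext L d lam ((c - 1) + ((d : ℤ) + 1))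
              = SFund.ext L d lam (c - 1) + ((L : ℤ) - 1) := SFund.ext_period_one L d lam (c - 1)
          rw [show (c - 1) + ((d : ℤ) + 1) = (d : ℤ) + c by ring] at h2
          omega
    · -- maps back to lam
      show (SShiftEquiv L d ^ (-c)) ((SShiftEquiv L d ^ c) lam) = lam
      rw [← Equiv.Perm.mul_apply, ← zpow_add]
      simp
end

section
/- Let n be a positive integer and consider the linear order A_n = {0 < 1 < ⋯ < n−1}. For ordered sequences λ, μ ∈ os_n^{d+1}, there exists a nonzero homomorphism from the interval module M(λ) = M[(λ₁,…,λ_d), (λ₂,…,λ_{d+1})] to M(μ) = M[(μ₁,…,μ_d), (μ₂,…,μ_{d+1})] over the poset A_n^d if and only if λ interlaces μ, and in that case the Hom-space is one-dimensional. -/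
/-- The first `d` entries of a tuple of length `d+1`. -/
def initF {P : Type*} {d : ℕ} (f : Fin (d + 1) → P) : Fin d → P := fun i => f i.castSucc

/-- The last `d` entries of a tuple of length `d+1`. -/
def tailF {P : Type*} {d : ℕ} (f : Fin (d + 1) → P) : Fin d → P := fun i => f i.succ

/-- For `λ, μ ∈ os_n^{d+1}`, there is a nonzero homomorphism
`M(λ) = M[(λ₁,…,λ_d),(λ₂,…,λ_{d+1})] → M(μ)` over the poset `A_n^d` iff `λ ↝ μ`,
in which case the Hom-space is one-dimensional. -/
theorem hom_M_lambda_M_mu (K : Type*) [Field K] {n d : ℕ} (hd : 0 < d) (hn : 0 < n)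
    (lam mu : Fin (d + 1) → Fin n) (hlam : Monotone lam) (hmu : Monotone mu) :
    ((∃ φ ∈ intervalHom K (Set.Icc (initF lam) (tailF lam))
        (Set.Icc (initF mu) (tailF mu)), φ ≠ 0) ↔ Interlaces lam mu) ∧
    (Interlaces lam mu →
      Module.rank K ↥(intervalHom K (Set.Icc (initF lam) (tailF lam))
        (Set.Icc (initF mu) (tailF mu))) = 1) := by
  classical
  set S := Set.Icc (initF lam) (tailF lam) with hSdef
  set T := Set.Icc (initF mu) (tailF mu) with hTdef
  have hab : initF lam ≤ tailF lam := fun i => hlam (Fin.castSucc_le_succ i)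
  have hce : initF mu ≤ tailF mu := fun i => hmu (Fin.castSucc_le_succ i)
  -- forward direction of the iff
  have fwd : (∃ φ ∈ intervalHom K S T, φ ≠ 0) → Interlaces lam mu := by
    rintro ⟨φ, ⟨h1, h2, h3, h4⟩, hφ⟩
    obtain ⟨z, hz⟩ : ∃ z, φ z ≠ 0 := by
      by_contra h; push_neg at h; exact hφ (funext h)
    have hzST : z ∈ S ∩ T := by by_contra h; exact hz (h1 z h)
    obtain ⟨⟨haz, hzb⟩, hcz, hze⟩ := hzST
    have hcS : initF mu ∈ S := by
      by_contra h
      exact hz (h3 (initF mu) z hcz ⟨⟨haz, hzb⟩, hcz, hze⟩ ⟨le_refl _, hce⟩ h)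
    have hbT : tailF lam ∈ T := by
      by_contra h
      exact hz (h4 z (tailF lam) hzb ⟨⟨haz, hzb⟩, hcz, hze⟩ ⟨hab, le_refl _⟩ h)
    constructor
    · intro i
      rcases lt_or_ge (i : ℕ) d with hi | hi
      · have h := hcS.1 ⟨(i : ℕ), hi⟩
        have e1 : (⟨(i : ℕ), hi⟩ : Fin d).castSucc = i := Fin.ext rfl
        simpa only [initF, e1] using h
      · have hid : (i : ℕ) = d := le_antisymm (Nat.lt_succ_iff.mp i.isLt) hi
        have h := hbT.2 ⟨d - 1, by omega⟩
        have e1 : (⟨d - 1, by omega⟩ : Fin d).succ = i := Fin.ext (by simp; omega)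
        simpa only [tailF, e1] using h
    · intro i h
      have hi : i < d := Nat.lt_of_succ_lt_succ h
      have h' := le_trans (hcz ⟨i, hi⟩) (hzb ⟨i, hi⟩)
      have e1 : (⟨i, hi⟩ : Fin d).castSucc = ⟨i, Nat.lt_of_succ_lt h⟩ := Fin.ext rfl
      have e2 : (⟨i, hi⟩ : Fin d).succ = ⟨i + 1, h⟩ := Fin.ext rfl
      simpa only [initF, tailF, e1, e2] using h'
  refine ⟨⟨fwd, ?_⟩, ?_⟩
  all_goals intro hint
  -- common facts under interlacing
  all_goals
    have hac : initF lam ≤ initF mu := fun j => hint.1 j.castSucc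
    have hcb : initF mu ≤ tailF lam := by
      intro j
      have h := hint.2 (j : ℕ) (Nat.succ_lt_succ j.isLt)
      have e1 : (⟨(j : ℕ), Nat.lt_of_succ_lt (Nat.succ_lt_succ j.isLt)⟩ : Fin (d+1))
          = j.castSucc := Fin.ext rfl
      have e2 : (⟨(j : ℕ) + 1, Nat.succ_lt_succ j.isLt⟩ : Fin (d+1)) = j.succ :=
        Fin.ext rfl
      simpa only [initF, tailF, e1, e2] using h
    have hbe : tailF lam ≤ tailF mu := fun j => hint.1 j.succ
    have hcmem : initF mu ∈ S ∩ T := ⟨⟨hac, hcb⟩, le_refl _, hce⟩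
    set ind : (Fin d → Fin n) → K := (S ∩ T).indicator (fun _ => (1 : K)) with hind
    have hindmem : ind ∈ intervalHom K S T := by
      refine ⟨fun x hx => Set.indicator_of_notMem hx _, ?_, ?_, ?_⟩
      · intro x y _ hx hy
        rw [hind, Set.indicator_of_mem hx, Set.indicator_of_mem hy]
      · intro x y hxy hy hxT hxS
        exact absurd ⟨le_trans hac hxT.1, le_trans hxy hy.1.2⟩ hxS
      · intro x y hxy hx hyS hyT
        exact absurd ⟨le_trans hx.2.1 hxy, le_trans hyS.2 hbe⟩ hyT
    have hindne : ind ≠ 0 := by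
      intro h
      have := congrFun h (initF mu)
      rw [hind, Set.indicator_of_mem hcmem] at this
      exact one_ne_zero this
  · exact ⟨ind, hindmem, hindne⟩
  · have hspan : intervalHom K S T = K ∙ ind := by
      apply le_antisymm
      · rintro φ ⟨h1, h2, h3, h4⟩
        rw [Submodule.mem_span_singleton]
        refine ⟨φ (initF mu), funext fun x => ?_⟩
        by_cases hx : x ∈ S ∩ T
        · rw [Pi.smul_apply, hind, Set.indicator_of_mem hx, smul_eq_mul, mul_one]
          exact h2 (initF mu) x hx.2.1 hcmem hx
        · rw [Pi.smul_apply, hind, Set.indicator_of_notMem hx, smul_eq_mul, mul_zero,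
            h1 x hx]
      · rw [Submodule.span_singleton_le_iff_mem]
        exact hindmem
    rw [rank_submodule_eq_one_iff]
    exact ⟨ind, hindmem, hindne, le_of_eq hspan⟩
end

section
/- Let P be a poset, d a positive integer, and λ ∈ os^{d+1}(P) an ordered sequence of length d+1. If η: M(λ) → M(μ) is a nonzero homomorphism of modules over the incidence category of P^d between the interval modules associated to ordered sequences λ, μ of length d+1, then the image of η is isomorphic to the interval module M[(μ₁,…,μ_d), (λ₂,…,λ_{d+1})]. -/
/-- If `η : M(λ) → M(μ)` is a nonzero homomorphism between the interval modules
associated to ordered sequences `λ, μ` of length `d+1` over the poset `P^d`, then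
its image is the interval module `M[(μ₁,…,μ_d),(λ₂,…,λ_{d+1})]`: the support of
the scalar components of `η` is exactly the interval `[(μ₁,…,μ_d),(λ₂,…,λ_{d+1})]`. -/
theorem image_of_nonzero_hom (K : Type*) [Field K] {P : Type*} [PartialOrder P]
    {d : ℕ} (hd : 0 < d)
    (lam mu : Fin (d + 1) → P) (hlam : Monotone lam) (hmu : Monotone mu)
    (φ : (Fin d → P) → K)
    (hφ : φ ∈ intervalHom K (Set.Icc (initF lam) (tailF lam))
      (Set.Icc (initF mu) (tailF mu)))
    (hne : φ ≠ 0) :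
    {x : Fin d → P | φ x ≠ 0} = Set.Icc (initF mu) (tailF lam) := by
  obtain ⟨h1, h2, h3, h4⟩ := hφ
  obtain ⟨x0, hx0⟩ : ∃ x, φ x ≠ 0 := by
    by_contra h
    push_neg at h
    exact hne (funext h)
  have hx0ST : x0 ∈ Set.Icc (initF lam) (tailF lam) ∩ Set.Icc (initF mu) (tailF mu) := by
    by_contra h
    exact hx0 (h1 x0 h)
  obtain ⟨⟨hS1, hS2⟩, hT1, hT2⟩ := hx0ST
  -- interleaving, first part: lam i ≤ mu i on castSucc indices
  have hA : ∀ i : Fin d, lam i.castSucc ≤ mu i.castSucc := by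
    intro i
    by_contra hc
    apply hx0
    refine h3 (Function.update x0 i (mu i.castSucc)) x0 ?_ ⟨⟨hS1, hS2⟩, hT1, hT2⟩ ?_ ?_
    · intro k
      by_cases hk : k = i
      · subst hk; simpa [initF] using hT1 k
      · simp [Function.update_of_ne hk]
    · constructor
      · intro k
        by_cases hk : k = i
        · subst hk; simp [initF]
        · simpa [Function.update_of_ne hk] using hT1 k
      · intro k
        by_cases hk : k = i
        · subst hk
          simpa [tailF] using hmu (Fin.castSucc_le_succ k)
        · simpa [Function.update_of_ne hk] using hT2 k
    · rintro ⟨hl, -⟩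
      have := hl i
      simp only [Function.update_self] at this
      exact hc this
  -- interleaving, second part: lam i ≤ mu i on succ indices
  have hB : ∀ i : Fin d, lam i.succ ≤ mu i.succ := by
    intro i
    by_contra hc
    apply hx0
    refine h4 x0 (Function.update x0 i (lam i.succ)) ?_ ⟨⟨hS1, hS2⟩, hT1, hT2⟩ ?_ ?_
    · intro k
      by_cases hk : k = i
      · subst hk; simpa [tailF] using hS2 k
      · simp [Function.update_of_ne hk]
    · constructor
      · intro k
        by_cases hk : k = i
        · subst hk
          simpa [initF] using hlam (Fin.castSucc_le_succ k)
        · simpa [Function.update_of_ne hk] using hS1 k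
      · intro k
        by_cases hk : k = i
        · subst hk; simp [tailF]
        · simpa [Function.update_of_ne hk] using hS2 k
    · rintro ⟨-, hr⟩
      have := hr i
      simp only [Function.update_self] at this
      exact hc this
  -- the target interval is contained in S ∩ T
  have hsub : ∀ x : Fin d → P, initF mu ≤ x → x ≤ tailF lam →
      x ∈ Set.Icc (initF lam) (tailF lam) ∩ Set.Icc (initF mu) (tailF mu) :=
    fun x hx1 hx2 =>
      ⟨⟨fun i => (hA i).trans (hx1 i), hx2⟩, hx1, fun i => (hx2 i).trans (hB i)⟩
  have hmuST : initF mu ∈ Set.Icc (initF lam) (tailF lam) ∩ Set.Icc (initF mu) (tailF mu) :=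
    hsub _ le_rfl (fun i => (hT1 i).trans (hS2 i))
  ext x
  simp only [Set.mem_setOf_eq, Set.mem_Icc]
  constructor
  · intro hx
    have hxST : x ∈ Set.Icc (initF lam) (tailF lam) ∩ Set.Icc (initF mu) (tailF mu) := by
      by_contra h
      exact hx (h1 x h)
    exact ⟨hxST.2.1, hxST.1.2⟩
  · rintro ⟨hx1, hx2⟩ hzero
    have e1 : φ (initF mu) = φ x := h2 (initF mu) x hx1 hmuST (hsub x hx1 hx2)
    have e2 : φ (initF mu) = φ x0 := h2 (initF mu) x0 hT1 hmuST ⟨⟨hS1, hS2⟩, hT1, hT2⟩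
    exact hx0 (e2 ▸ e1 ▸ hzero)
end
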